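/- In any DDP with budget B ≥ 0, the principal's optimal value over implementable policies equals the optimum of the constrained path problem: max{ V(π, R^P) : π a B-implementable policy } = max{ V(π, R^P) : π a policy with V(π, R^A) ≥ V(π^A, R^A) − B }, and both maxima are attained. -/
import Mathlib

open Finset
open scoped Classical

noncomputable def ddpTraj {S A : Type} (act : S → Finset A) (next : S → A → S)
    (π : S → A) : ℕ → S → Finset S
  | 0, _ => ∅
  | n+1, s => if act s = ∅ then ∅ else insert s (ddpTraj act next π n (next s (π s)))

lemma ddpTraj_rank_le {S A : Type} (act : S → Finset A) (next : S → A → S) (rank : S → ℕ)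
    (hacyc : ∀ s, ∀ a ∈ act s, rank (next s a) < rank s)
    (π : S → A) (hπ : ∀ s, act s ≠ ∅ → π s ∈ act s) :
    ∀ n s t, t ∈ ddpTraj act next π n s → rank t ≤ rank s := by
  intro n
  induction n with
  | zero => intro s t ht; simp [ddpTraj] at ht
  | succ n ih =>
    intro s t ht
    by_cases h : act s = ∅
    · simp [ddpTraj, h] at ht
    · simp only [ddpTraj, if_neg h, mem_insert] at ht
      rcases ht with rfl | ht
      · exact le_rfl
      · exact (ih _ _ ht).trans (hacyc s _ (hπ s h)).le

lemma ddpTraj_act {S A : Type} (act : S → Finset A) (next : S → A → S) (π : S → A) :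
    ∀ n s t, t ∈ ddpTraj act next π n s → act t ≠ ∅ := by
  intro n
  induction n with
  | zero => intro s t ht; simp [ddpTraj] at ht
  | succ n ih =>
    intro s t ht
    by_cases h : act s = ∅
    · simp [ddpTraj, h] at ht
    · simp only [ddpTraj, if_neg h, mem_insert] at ht
      rcases ht with rfl | ht
      · exact h
      · exact ih _ _ ht

lemma ddpTraj_next {S A : Type} (act : S → Finset A) (next : S → A → S) (rank : S → ℕ)
    (hacyc : ∀ s, ∀ a ∈ act s, rank (next s a) < rank s)
    (π : S → A) (hπ : ∀ s, act s ≠ ∅ → π s ∈ act s) :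
    ∀ n u s, rank u < n → s ∈ ddpTraj act next π n u →
      act (next s (π s)) ≠ ∅ → next s (π s) ∈ ddpTraj act next π n u := by
  intro n
  induction n with
  | zero => intro u s h; omega
  | succ n ih =>
    intro u s hr hs hne
    by_cases h : act u = ∅
    · simp [ddpTraj, h] at hs
    · simp only [ddpTraj, if_neg h, mem_insert] at hs ⊢
      rcases hs with rfl | hs
      · right
        obtain ⟨k, hk⟩ : ∃ k, n = k + 1 := by
          have := hacyc s _ (hπ s h); exact ⟨n - 1, by omega⟩
        subst hk
        simp only [ddpTraj, if_neg hne]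
        exact mem_insert_self _ _
      · have hrn : rank (next u (π u)) < n := by
          have := hacyc u _ (hπ u h); omega
        exact Or.inr (ih _ _ hrn hs hne)

lemma ddpV_sum {S A : Type} (act : S → Finset A) (next : S → A → S) (rank : S → ℕ)
    (hacyc : ∀ s, ∀ a ∈ act s, rank (next s a) < rank s)
    (V : (S → A) → (S → A → ℝ) → S → ℝ)
    (hVterm : ∀ (π : S → A) (R : S → A → ℝ) (s : S), act s = ∅ → V π R s = 0)
    (hVrec : ∀ (π : S → A) (R : S → A → ℝ) (s : S), act s ≠ ∅ →
      V π R s = R s (π s) + V π R (next s (π s)))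
    (π : S → A) (hπ : ∀ s, act s ≠ ∅ → π s ∈ act s) (R : S → A → ℝ) :
    ∀ n s, rank s < n → V π R s = ∑ t ∈ ddpTraj act next π n s, R t (π t) := by
  intro n
  induction n with
  | zero => intro s h; omega
  | succ n ih =>
    intro s hr
    by_cases h : act s = ∅
    · simp [ddpTraj, h, hVterm π R s h]
    · have hmem := hπ s h
      have hrn : rank (next s (π s)) < n := by have := hacyc s _ hmem; omega
      have hnotmem : s ∉ ddpTraj act next π n (next s (π s)) := by
        intro hmem'
        have := ddpTraj_rank_le act next rank hacyc π hπ n _ _ hmem'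
        have := hacyc s _ hmem; omega
      simp only [ddpTraj, if_neg h]
      rw [Finset.sum_insert hnotmem, hVrec π R s h, ih _ hrn]

lemma ddpV_agree {S A : Type} (act : S → Finset A) (next : S → A → S) (rank : S → ℕ)
    (hacyc : ∀ s, ∀ a ∈ act s, rank (next s a) < rank s)
    (V : (S → A) → (S → A → ℝ) → S → ℝ)
    (hVterm : ∀ (π : S → A) (R : S → A → ℝ) (s : S), act s = ∅ → V π R s = 0)
    (hVrec : ∀ (π : S → A) (R : S → A → ℝ) (s : S), act s ≠ ∅ →
      V π R s = R s (π s) + V π R (next s (π s)))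
    (π π' : S → A) (hπ : ∀ s, act s ≠ ∅ → π s ∈ act s) (R : S → A → ℝ) :
    ∀ n s, rank s < n → (∀ t, rank t ≤ rank s → π t = π' t) → V π R s = V π' R s := by
  intro n
  induction n with
  | zero => intro s h; omega
  | succ n ih =>
    intro s hr hag
    by_cases h : act s = ∅
    · rw [hVterm π R s h, hVterm π' R s h]
    · have heq : π s = π' s := hag s le_rfl
      have hrn : rank (next s (π s)) < n := by have := hacyc s _ (hπ s h); omega
      rw [hVrec π R s h, hVrec π' R s h, ← heq]
      have hnext : V π R (next s (π s)) = V π' R (next s (π s)) := by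
        refine ih _ hrn fun t ht => hag t ?_
        have := hacyc s _ (hπ s h); omega
      rw [hnext]
lemma ddp_step {S A : Type} (act : S → Finset A) (next : S → A → S) (rank : S → ℕ)
    (hacyc : ∀ s, ∀ a ∈ act s, rank (next s a) < rank s)
    (V : (S → A) → (S → A → ℝ) → S → ℝ)
    (hVterm : ∀ (π : S → A) (R : S → A → ℝ) (s : S), act s = ∅ → V π R s = 0)
    (hVrec : ∀ (π : S → A) (R : S → A → ℝ) (s : S), act s ≠ ∅ →
      V π R s = R s (π s) + V π R (next s (π s)))
    (RA : S → A → ℝ)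
    (πA : S → A) (hπA : ∀ s, act s ≠ ∅ → πA s ∈ act s)
    (hπAopt : ∀ π : S → A, (∀ s, act s ≠ ∅ → π s ∈ act s) → ∀ s, V π RA s ≤ V πA RA s) :
    ∀ s, ∀ a ∈ act s, RA s a + V πA RA (next s a) ≤ V πA RA s := by
  intro s a ha
  classical
  set π'' : S → A := fun t => if t = s then a else πA t with hπ''
  have hne : act s ≠ ∅ := fun h => by simp [h] at ha
  have hvalid : ∀ t, act t ≠ ∅ → π'' t ∈ act t := by
    intro t ht
    by_cases h : t = s
    · subst h; simpa [hπ''] using ha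
    · simpa [hπ'', h] using hπA t ht
  have h1 : V π'' RA s = RA s a + V π'' RA (next s a) := by
    have := hVrec π'' RA s hne
    simpa [hπ''] using this
  have h2 : V π'' RA (next s a) = V πA RA (next s a) := by
    refine ddpV_agree act next rank hacyc V hVterm hVrec π'' πA hvalid RA
      (rank (next s a) + 1) _ (by omega) ?_
    intro t ht
    have hts : t ≠ s := by
      intro h; rw [h] at ht
      have := hacyc s a ha; omega
    simp [hπ'', hts]
  have h3 : V π'' RA s ≤ V πA RA s := hπAopt π'' hvalid s
  rw [h1, h2] at h3
  exact h3

lemma ddp_telescope {S A : Type} (act : S → Finset A) (next : S → A → S) (rank : S → ℕ)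
    (hacyc : ∀ s, ∀ a ∈ act s, rank (next s a) < rank s)
    (V : (S → A) → (S → A → ℝ) → S → ℝ)
    (hVterm : ∀ (π : S → A) (R : S → A → ℝ) (s : S), act s = ∅ → V π R s = 0)
    (hVrec : ∀ (π : S → A) (R : S → A → ℝ) (s : S), act s ≠ ∅ →
      V π R s = R s (π s) + V π R (next s (π s)))
    (RA : S → A → ℝ) (πA : S → A)
    (π : S → A) (hπ : ∀ s, act s ≠ ∅ → π s ∈ act s) :
    ∀ n s, rank s < n →
      ∑ t ∈ ddpTraj act next π n s,
        (V πA RA t - (RA t (π t) + V πA RA (next t (π t)))) = V πA RA s - V π RA s := by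
  intro n
  induction n with
  | zero => intro s h; omega
  | succ n ih =>
    intro s hr
    by_cases h : act s = ∅
    · simp [ddpTraj, h, hVterm πA RA s h, hVterm π RA s h]
    · have hmem := hπ s h
      have hrn : rank (next s (π s)) < n := by have := hacyc s _ hmem; omega
      have hnotmem : s ∉ ddpTraj act next π n (next s (π s)) := by
        intro hmem'
        have := ddpTraj_rank_le act next rank hacyc π hπ n _ _ hmem'
        have := hacyc s _ hmem; omega
      simp only [ddpTraj, if_neg h]
      rw [Finset.sum_insert hnotmem, ih _ hrn, hVrec π RA s h]
      ring
/-- in a DDP with budget `B ≥ 0`, the principal's optimum over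
`B`-implementable policies equals the optimum of the constrained problem
`max { V(π,R^P) : V(π,R^A) ≥ V(π^A,R^A) − B }`, and both maxima are attained. -/
theorem stmt_17 {S A : Type} [Fintype S] [Fintype A]
    (s₀ : S) (act : S → Finset A) (next : S → A → S)
    (rank : S → ℕ) (hacyc : ∀ s, ∀ a ∈ act s, rank (next s a) < rank s)
    (V : (S → A) → (S → A → ℝ) → S → ℝ)
    (hVterm : ∀ (π : S → A) (R : S → A → ℝ) (s : S), act s = ∅ → V π R s = 0)
    (hVrec : ∀ (π : S → A) (R : S → A → ℝ) (s : S), act s ≠ ∅ →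
      V π R s = R s (π s) + V π R (next s (π s)))
    (RA RP : S → A → ℝ)
    (πA : S → A) (hπA : ∀ s, act s ≠ ∅ → πA s ∈ act s)
    (hπAopt : ∀ π : S → A, (∀ s, act s ≠ ∅ → π s ∈ act s) → ∀ s, V π RA s ≤ V πA RA s)
    (B : ℝ) (hB : 0 ≤ B)
    (Impl : (S → A) → Prop)
    (hImpl : ∀ π : S → A, Impl π ↔
      ∃ RB : S → A → ℝ, (∀ s a, 0 ≤ RB s a) ∧ (∑ s, ∑ a, RB s a) ≤ B ∧
        ∀ π' : S → A, (∀ s, act s ≠ ∅ → π' s ∈ act s) →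
          V π' (fun s a => RA s a + RB s a) s₀ ≤ V π (fun s a => RA s a + RB s a) s₀) :
    ∃ π₁ π₂ : S → A,
      (∀ s, act s ≠ ∅ → π₁ s ∈ act s) ∧ Impl π₁ ∧
      (∀ π : S → A, (∀ s, act s ≠ ∅ → π s ∈ act s) → Impl π →
        V π RP s₀ ≤ V π₁ RP s₀) ∧
      (∀ s, act s ≠ ∅ → π₂ s ∈ act s) ∧ (V πA RA s₀ - B ≤ V π₂ RA s₀) ∧
      (∀ π : S → A, (∀ s, act s ≠ ∅ → π s ∈ act s) →
        V πA RA s₀ - B ≤ V π RA s₀ → V π RP s₀ ≤ V π₂ RP s₀) ∧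
      V π₁ RP s₀ = V π₂ RP s₀ := by
  classical
  -- Claim 1: implementable (and valid) implies the budget constraint.
  have claim1 : ∀ π : S → A, (∀ s, act s ≠ ∅ → π s ∈ act s) → Impl π →
      V πA RA s₀ - B ≤ V π RA s₀ := by
    intro π hπ hI
    obtain ⟨RB, hRB0, hRBsum, hopt⟩ := (hImpl π).mp hI
    have hrs : rank s₀ < rank s₀ + 1 := by omega
    have hA1 : V πA RA s₀ ≤ V πA (fun s a => RA s a + RB s a) s₀ := by
      rw [ddpV_sum act next rank hacyc V hVterm hVrec πA hπA RA (rank s₀ + 1) s₀ hrs,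
          ddpV_sum act next rank hacyc V hVterm hVrec πA hπA _ (rank s₀ + 1) s₀ hrs]
      refine Finset.sum_le_sum fun t ht => ?_
      have := hRB0 t (πA t); linarith
    have hA2 := hopt πA hπA
    have hA3 : V π (fun s a => RA s a + RB s a) s₀ ≤ V π RA s₀ + B := by
      rw [ddpV_sum act next rank hacyc V hVterm hVrec π hπ _ (rank s₀ + 1) s₀ hrs,
          ddpV_sum act next rank hacyc V hVterm hVrec π hπ RA (rank s₀ + 1) s₀ hrs]
      rw [Finset.sum_add_distrib]
      have h1 : ∑ t ∈ ddpTraj act next π (rank s₀ + 1) s₀, RB t (π t) ≤ ∑ s, ∑ a, RB s a := by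
        calc ∑ t ∈ ddpTraj act next π (rank s₀ + 1) s₀, RB t (π t)
            ≤ ∑ t ∈ ddpTraj act next π (rank s₀ + 1) s₀, ∑ a, RB t a :=
              Finset.sum_le_sum fun t _ =>
                Finset.single_le_sum (fun a _ => hRB0 t a) (Finset.mem_univ _)
          _ ≤ ∑ s, ∑ a, RB s a := by
              refine Finset.sum_le_sum_of_subset_of_nonneg (Finset.subset_univ _) ?_
              intro t _ _
              exact Finset.sum_nonneg fun a _ => hRB0 t a
      linarith
    linarith
  -- Claim 2: the budget constraint implies implementability.
  have claim2 : ∀ π : S → A, (∀ s, act s ≠ ∅ → π s ∈ act s) →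
      V πA RA s₀ - B ≤ V π RA s₀ → Impl π := by
    intro π hπ hcon
    rw [hImpl]
    set T : Finset S := ddpTraj act next π (rank s₀ + 1) s₀ with hT
    set adv : S → ℝ := fun s => V πA RA s - (RA s (π s) + V πA RA (next s (π s))) with hadv
    set RB : S → A → ℝ := fun s a => if s ∈ T ∧ a = π s then adv s else 0 with hRB
    have hstep := ddp_step act next rank hacyc V hVterm hVrec RA πA hπA hπAopt
    have hadv0 : ∀ s ∈ T, 0 ≤ adv s := by
      intro s hs
      have hne : act s ≠ ∅ := ddpTraj_act act next π _ _ _ hs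
      have := hstep s (π s) (hπ s hne)
      simp only [hadv]; linarith
    refine ⟨RB, ?_, ?_, ?_⟩
    · intro s a
      by_cases h : s ∈ T ∧ a = π s
      · rw [hRB]; simp only [if_pos h]; exact hadv0 s h.1
      · rw [hRB]; simp only [if_neg h]; exact le_rfl
    · -- total cost
      have hinner : ∀ s : S, ∑ a, RB s a = if s ∈ T then adv s else 0 := by
        intro s
        by_cases hs : s ∈ T
        · simp only [hRB, hs, true_and, if_pos hs]
          rw [Finset.sum_ite_eq' Finset.univ (π s) (fun _ => adv s)]
          simp
        · simp [hRB, hs]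
      have houter : ∑ s, ∑ a, RB s a = ∑ s ∈ T, adv s := by
        rw [Finset.sum_congr rfl fun s _ => hinner s]
        rw [Finset.sum_ite_mem Finset.univ T adv, Finset.univ_inter]
      rw [houter]
      have := ddp_telescope act next rank hacyc V hVterm hVrec RA πA π hπ
        (rank s₀ + 1) s₀ (by omega)
      rw [hT]
      simp only [hadv]
      rw [this]
      linarith
    · -- π is optimal for RA + RB
      intro π' hπ'
      by_cases hs0 : act s₀ = ∅
      · rw [hVterm π' _ s₀ hs0, hVterm π _ s₀ hs0]
      have hs₀T : s₀ ∈ T := by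
        rw [hT]
        show s₀ ∈ ddpTraj act next π (rank s₀ + 1) s₀
        simp only [ddpTraj, if_neg hs0]
        exact Finset.mem_insert_self _ _
      -- value of π equals the optimal agent value on trajectory states
      have heq : ∀ n s, rank s < n → s ∈ T →
          V π (fun s a => RA s a + RB s a) s = V πA RA s := by
        intro n
        induction n with
        | zero => intro s h; omega
        | succ n ih =>
          intro s hr hsT
          have hne : act s ≠ ∅ := ddpTraj_act act next π _ _ _ hsT
          have ha := hπ s hne
          have hRBv : RB s (π s) = adv s := by rw [hRB]; simp [hsT]
          rw [hVrec π _ s hne]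
          show RA s (π s) + RB s (π s) + V π (fun s a => RA s a + RB s a) (next s (π s))
            = V πA RA s
          rw [hRBv]
          by_cases hn : act (next s (π s)) = ∅
          · rw [hVterm π _ _ hn]
            have := hVterm πA RA _ hn
            simp only [hadv]; linarith
          · have hnT : next s (π s) ∈ T :=
              ddpTraj_next act next rank hacyc π hπ _ _ _ (by omega) hsT hn
            have hrn : rank (next s (π s)) < n := by have := hacyc s _ ha; omega
            rw [ih _ hrn hnT]
            simp only [hadv]; ring
      -- any valid policy's value is at most the optimal agent value
      have hub : ∀ n s, rank s < n →
          V π' (fun s a => RA s a + RB s a) s ≤ V πA RA s := by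
        intro n
        induction n with
        | zero => intro s h; omega
        | succ n ih =>
          intro s hr
          by_cases h : act s = ∅
          · rw [hVterm π' _ s h, hVterm πA RA s h]
          · have ha := hπ' s h
            have hrn : rank (next s (π' s)) < n := by have := hacyc s _ ha; omega
            have hih := ih _ hrn
            rw [hVrec π' _ s h]
            show RA s (π' s) + RB s (π' s) + V π' (fun s a => RA s a + RB s a) (next s (π' s))
              ≤ V πA RA s
            by_cases hc : s ∈ T ∧ π' s = π s
            · have hps := hc.2
              rw [hps] at hih ⊢
              have hRBv : RB s (π s) = adv s := by rw [hRB]; simp [hc.1]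
              rw [hRBv]
              simp only [hadv]
              linarith
            · have hRBv : RB s (π' s) = 0 := by rw [hRB]; simp only [if_neg hc]
              have := hstep s (π' s) ha
              rw [hRBv]
              linarith
      have h1 := hub (rank s₀ + 1) s₀ (by omega)
      have h2 := heq (rank s₀ + 1) s₀ (by omega) hs₀T
      linarith
  -- Extract a maximizer of the principal value over the constrained finite set.
  set Φ : Finset (S → A) := Finset.univ.filter
      (fun π => (∀ s, act s ≠ ∅ → π s ∈ act s) ∧ V πA RA s₀ - B ≤ V π RA s₀) with hΦ
  have hπAΦ : πA ∈ Φ := by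
    rw [hΦ, Finset.mem_filter]
    exact ⟨Finset.mem_univ _, hπA, by linarith⟩
  obtain ⟨π₂, hπ₂Φ, hmax⟩ := Finset.exists_max_image Φ (fun π => V π RP s₀) ⟨πA, hπAΦ⟩
  rw [hΦ, Finset.mem_filter] at hπ₂Φ
  obtain ⟨-, hπ₂v, hπ₂c⟩ := hπ₂Φ
  refine ⟨π₂, π₂, hπ₂v, claim2 π₂ hπ₂v hπ₂c, ?_, hπ₂v, hπ₂c, ?_, rfl⟩
  · intro π hπv hπI
    apply hmax
    rw [hΦ, Finset.mem_filter]
    exact ⟨Finset.mem_univ _, hπv, claim1 π hπv hπI⟩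
  · intro π hπv hcon
    apply hmax
    rw [hΦ, Finset.mem_filter]
    exact ⟨Finset.mem_univ _, hπv, hcon⟩
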